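/- Let μ be a finite measure on ℝ, let M > 0, and let F : [−M, M] → ℝ be continuous and strictly increasing. Let h₀ and h₁, h₂, … be measurable functions from ℝ into [−M, M]. If ∫ | F(hₙ(u)) − F(h₀(u)) | dμ(u) → 0 as n → ∞, then ∫ ( hₙ(u) − h₀(u) )² dμ(u) → 0 as n → ∞. -/

import Mathlib

open MeasureTheory Filter

/-- Reduction step in Appendix A: let `μ` be a finite measure on `ℝ`, `M > 0`, and
`F` continuous and strictly increasing on `[−M, M]`. If `h₀` and `hₙ` are measurable
functions with values in `[−M, M]` and
`∫ |F (hₙ u) − F (h₀ u)| dμ → 0`, then `∫ (hₙ u − h₀ u)² dμ → 0`. -/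
theorem stmt_9
    (μ : Measure ℝ) [IsFiniteMeasure μ]
    (M : ℝ) (hM : 0 < M)
    (F : ℝ → ℝ)
    (hF_cont : ContinuousOn F (Set.Icc (-M) M))
    (hF_mono : StrictMonoOn F (Set.Icc (-M) M))
    (h₀ : ℝ → ℝ) (h : ℕ → ℝ → ℝ)
    (h₀_meas : Measurable h₀) (h_meas : ∀ n, Measurable (h n))
    (h₀_mem : ∀ u, h₀ u ∈ Set.Icc (-M) M)
    (h_mem : ∀ n u, h n u ∈ Set.Icc (-M) M)
    (hconv :
      Tendsto (fun n => ∫ u, |F (h n u) - F (h₀ u)| ∂μ) atTop (nhds 0)) :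
    Tendsto (fun n => ∫ u, (h n u - h₀ u) ^ 2 ∂μ) atTop (nhds 0) := by
  -- clamp to [-M, M] and the global continuous extension G of F
  set c : ℝ → ℝ := fun x => max (-M) (min M x) with hc_def
  have hc_cont : Continuous c := continuous_const.max (continuous_const.min continuous_id)
  have hc_mem : ∀ x, c x ∈ Set.Icc (-M) M := fun x =>
    ⟨le_max_left _ _, max_le (by linarith) (min_le_left _ _)⟩
  have hc_eq : ∀ x ∈ Set.Icc (-M) M, c x = x := fun x hx => by
    simp only [hc_def, min_eq_right hx.2, max_eq_right hx.1]
  set G : ℝ → ℝ := F ∘ c with hG_def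
  have hG_cont : Continuous G := hF_cont.comp_continuous hc_cont hc_mem
  have hG_eq : ∀ x ∈ Set.Icc (-M) M, G x = F x := fun x hx => by
    simp only [hG_def, Function.comp_apply, hc_eq x hx]
  -- a uniform bound for F on [-M, M]
  obtain ⟨C, hC⟩ : ∃ C, ∀ x ∈ Set.Icc (-M) M, ‖F x‖ ≤ C :=
    isCompact_Icc.exists_bound_of_continuousOn hF_cont
  -- integrability of the differences
  have hint : ∀ n, Integrable (fun u => |G (h n u) - G (h₀ u)|) μ := by
    intro n
    refine (integrable_const (C + C)).mono'
      ((((hG_cont.measurable.comp (h_meas n)).sub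
        (hG_cont.measurable.comp h₀_meas)).abs).aestronglyMeasurable) ?_
    refine Filter.Eventually.of_forall fun u => ?_
    rw [Real.norm_eq_abs, abs_abs]
    have h1 := hC _ (h_mem n u); have h2 := hC _ (h₀_mem u)
    rw [hG_eq _ (h_mem n u), hG_eq _ (h₀_mem u)]
    rw [Real.norm_eq_abs] at h1 h2
    calc |F (h n u) - F (h₀ u)| ≤ |F (h n u)| + |F (h₀ u)| := abs_sub _ _
      _ ≤ C + C := add_le_add h1 h2
  -- convergence in measure of h n to h₀
  have key : TendstoInMeasure μ h atTop h₀ := by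
    rw [tendstoInMeasure_iff_dist]
    intro ε hε
    -- separation constant δ from compactness
    obtain ⟨δ, hδpos, hsep⟩ : ∃ δ > 0, ∀ x ∈ Set.Icc (-M) M, ∀ y ∈ Set.Icc (-M) M,
        ε ≤ |x - y| → δ ≤ |F x - F y| := by
      set K : Set (ℝ × ℝ) :=
        (Set.Icc (-M) M ×ˢ Set.Icc (-M) M) ∩ {p : ℝ × ℝ | ε ≤ |p.1 - p.2|} with hK_def
      have hK_closed : IsClosed K :=
        ((isClosed_Icc.prod isClosed_Icc)).inter
          (isClosed_le continuous_const (continuous_fst.sub continuous_snd).abs)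
      have hK_cpt : IsCompact K :=
        (isCompact_Icc.prod isCompact_Icc).of_isClosed_subset hK_closed
          Set.inter_subset_left
      by_cases hK : K.Nonempty
      · obtain ⟨p₀, hp₀K, hp₀min⟩ := hK_cpt.exists_isMinOn hK
          ((hG_cont.fst'.sub hG_cont.snd').abs.continuousOn)
        have h1 := hp₀K.1.1; have h2 := hp₀K.1.2
        refine ⟨|G p₀.1 - G p₀.2|, ?_, ?_⟩
        · have hne : p₀.1 ≠ p₀.2 := by
            intro hEq
            have hh := hp₀K.2
            rw [Set.mem_setOf_eq, hEq, sub_self, abs_zero] at hh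
            linarith
          have hFne : F p₀.1 ≠ F p₀.2 := fun hEq => hne (hF_mono.injOn h1 h2 hEq)
          have hGne : G p₀.1 ≠ G p₀.2 := by
            rw [hG_eq _ h1, hG_eq _ h2]; exact hFne
          exact abs_pos.mpr (sub_ne_zero.mpr hGne)
        · intro x hx y hy hxy
          have hmem : (x, y) ∈ K := ⟨⟨hx, hy⟩, hxy⟩
          have := hp₀min hmem
          simpa [hG_eq _ hx, hG_eq _ hy] using this
      · refine ⟨1, one_pos, fun x hx y hy hxy => ?_⟩
        exact absurd ⟨(x, y), ⟨⟨hx, hy⟩, hxy⟩⟩ hK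
    -- Markov inequality bound
    have hmeasG : ∀ n, Measurable fun u => ENNReal.ofReal |G (h n u) - G (h₀ u)| := fun n =>
      ((((hG_cont.measurable.comp (h_meas n)).sub
        (hG_cont.measurable.comp h₀_meas)).abs)).ennreal_ofReal
    have hbound : ∀ n, μ {x | ε ≤ dist (h n x) (h₀ x)} ≤
        (ENNReal.ofReal δ)⁻¹ * ∫⁻ u, ENNReal.ofReal |G (h n u) - G (h₀ u)| ∂μ := by
      intro n
      have hsub : {x | ε ≤ dist (h n x) (h₀ x)} ⊆
          {x | ENNReal.ofReal δ ≤ ENNReal.ofReal |G (h n x) - G (h₀ x)|} := by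
        intro x hx
        simp only [Set.mem_setOf_eq] at hx ⊢
        rw [Real.dist_eq] at hx
        have := hsep _ (h_mem n x) _ (h₀_mem x) hx
        rw [hG_eq _ (h_mem n x), hG_eq _ (h₀_mem x)]
        exact ENNReal.ofReal_le_ofReal this
      calc μ {x | ε ≤ dist (h n x) (h₀ x)}
          ≤ μ {x | ENNReal.ofReal δ ≤ ENNReal.ofReal |G (h n x) - G (h₀ x)|} :=
            measure_mono hsub
        _ ≤ (ENNReal.ofReal δ)⁻¹ *
              ∫⁻ u, ENNReal.ofReal |G (h n u) - G (h₀ u)| ∂μ := by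
            have hδ0 : ENNReal.ofReal δ ≠ 0 := by simp [hδpos]
            have hm := mul_meas_ge_le_lintegral (μ := μ) (hmeasG n) (ENNReal.ofReal δ)
            calc μ {x | ENNReal.ofReal δ ≤ ENNReal.ofReal |G (h n x) - G (h₀ x)|}
                = (ENNReal.ofReal δ)⁻¹ *
                    (ENNReal.ofReal δ *
                      μ {x | ENNReal.ofReal δ ≤ ENNReal.ofReal |G (h n x) - G (h₀ x)|}) := by
                  rw [← mul_assoc, ENNReal.inv_mul_cancel hδ0 ENNReal.ofReal_ne_top, one_mul]
              _ ≤ (ENNReal.ofReal δ)⁻¹ *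
                    ∫⁻ u, ENNReal.ofReal |G (h n u) - G (h₀ u)| ∂μ := by gcongr
    -- the right-hand side tends to 0
    have hlim : Tendsto (fun n => (ENNReal.ofReal δ)⁻¹ *
        ∫⁻ u, ENNReal.ofReal |G (h n u) - G (h₀ u)| ∂μ) atTop (nhds 0) := by
      have heq : ∀ n, ∫⁻ u, ENNReal.ofReal |G (h n u) - G (h₀ u)| ∂μ =
          ENNReal.ofReal (∫ u, |F (h n u) - F (h₀ u)| ∂μ) := by
        intro n
        have hptw : (fun u => |F (h n u) - F (h₀ u)|)
            = fun u => |G (h n u) - G (h₀ u)| := funext fun u => by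
          rw [hG_eq _ (h_mem n u), hG_eq _ (h₀_mem u)]
        rw [hptw, MeasureTheory.ofReal_integral_eq_lintegral_ofReal (hint n)
          (Filter.Eventually.of_forall fun u => abs_nonneg _)]
      simp only [heq]
      have h0 : Tendsto (fun n => ENNReal.ofReal (∫ u, |F (h n u) - F (h₀ u)| ∂μ))
          atTop (nhds 0) := by
        have := (ENNReal.continuous_ofReal.tendsto 0).comp hconv
        simpa [Function.comp_def] using this
      have hδ0 : ENNReal.ofReal δ ≠ 0 := by simp [hδpos]
      have := ENNReal.Tendsto.const_mul (a := (ENNReal.ofReal δ)⁻¹) h0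
        (Or.inr (ENNReal.inv_ne_top.mpr hδ0))
      simpa using this
    exact tendsto_of_tendsto_of_tendsto_of_le_of_le tendsto_const_nhds hlim
      (fun n => zero_le) hbound
  -- subsequence argument with dominated convergence
  refine tendsto_of_subseq_tendsto fun ns hns => ?_
  have key' : TendstoInMeasure μ (fun i => h (ns i)) atTop h₀ := fun ε hε =>
    (key ε hε).comp hns
  obtain ⟨ms, _hms_mono, hae⟩ := key'.exists_seq_tendsto_ae
  refine ⟨ms, ?_⟩
  have hdct : Tendsto (fun i => ∫ u, (h (ns (ms i)) u - h₀ u) ^ 2 ∂μ)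
      atTop (nhds (∫ u, (0 : ℝ) ∂μ)) := by
    refine tendsto_integral_of_dominated_convergence (fun _ => (2 * M) ^ 2)
      (fun i => (((h_meas (ns (ms i))).sub h₀_meas).pow_const 2).aestronglyMeasurable)
      (integrable_const _) (fun i => Filter.Eventually.of_forall fun u => ?_) ?_
    · rw [Real.norm_eq_abs, abs_pow, ← abs_abs (h (ns (ms i)) u - h₀ u)]
      refine pow_le_pow_left₀ (abs_nonneg _) ?_ 2
      rw [abs_abs]
      have h1 := h_mem (ns (ms i)) u; have h2 := h₀_mem u
      rw [abs_sub_le_iff]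
      constructor <;> [linarith [h1.1, h1.2, h2.1, h2.2]; linarith [h1.1, h1.2, h2.1, h2.2]]
    · filter_upwards [hae] with u hu
      have h1 : Tendsto (fun i => (h (ns (ms i)) u - h₀ u) ^ 2) atTop
          (nhds ((h₀ u - h₀ u) ^ 2)) := (hu.sub (tendsto_const_nhds (x := h₀ u))).pow 2
      simpa using h1
  simpa using hdct
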